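/- Let μ be a probability measure on sequence space Σ = X^ℕ with shift θ, asymptotically mean stationary with asymptotic mean Q, and suppose Q is ergodic for θ. Then for every measurable B ⊆ X, μ-almost every sequence x satisfies (1/T)·∑_{t=0}^{T−1} 1_B(x_t) → Q₀(B), where Q₀ is the one-dimensional marginal of Q. -/

import Mathlib

open MeasureTheory Filter

lemma avg_shift_iff (h : ℕ → ℝ) (c : ℝ) :
    Tendsto (fun T : ℕ => (∑ t ∈ Finset.range T, h (t + 1)) / T) atTop (nhds c) ↔
    Tendsto (fun T : ℕ => (∑ t ∈ Finset.range T, h t) / T) atTop (nhds c) := by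
  set A : ℕ → ℝ := fun T => ∑ t ∈ Finset.range T, h t with hA
  have hsum : ∀ T : ℕ, ∑ t ∈ Finset.range T, h (t + 1) = A (T + 1) - h 0 := by
    intro T; simp only [hA]; rw [Finset.sum_range_succ' h T]; ring
  have hinv : Tendsto (fun T : ℕ => (T : ℝ)⁻¹) atTop (nhds 0) :=
    tendsto_inv_atTop_nhds_zero_nat
  constructor
  · intro hb
    -- a (T+1) = b T * (T/(T+1)) + h 0 / (T+1)
    have key : ∀ T : ℕ, A (T + 1) / ((T : ℝ) + 1) =
        ((∑ t ∈ Finset.range T, h (t + 1)) / T) * ((T : ℝ) / ((T : ℝ) + 1))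
          + h 0 * ((T : ℝ) + 1)⁻¹ := by
      intro T
      rcases Nat.eq_zero_or_pos T with rfl | hT
      · simp [hsum, hA]
      · have hT0 : (T : ℝ) ≠ 0 := Nat.cast_ne_zero.mpr hT.ne'
        have hT1 : (T : ℝ) + 1 ≠ 0 := by positivity
        rw [hsum]
        field_simp
        ring
    have hfrac : Tendsto (fun T : ℕ => (T : ℝ) / ((T : ℝ) + 1)) atTop (nhds 1) := by
      have : ∀ᶠ T : ℕ in atTop, (T : ℝ) / ((T : ℝ) + 1) = 1 - ((T : ℝ) + 1)⁻¹ := by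
        filter_upwards [eventually_ge_atTop 0] with T _
        have hT1 : (T : ℝ) + 1 ≠ 0 := by positivity
        field_simp
        ring
      rw [tendsto_congr' this]
      simpa using tendsto_const_nhds.sub
        ((tendsto_natCast_atTop_atTop (R := ℝ)).atTop_add tendsto_const_nhds).inv_tendsto_atTop
    have hinv1 : Tendsto (fun T : ℕ => ((T : ℝ) + 1)⁻¹) atTop (nhds 0) :=
      ((tendsto_natCast_atTop_atTop (R := ℝ)).atTop_add tendsto_const_nhds).inv_tendsto_atTop
    have h1 : Tendsto (fun T : ℕ => A (T + 1) / ((T : ℝ) + 1)) atTop (nhds c) := by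
      have := (hb.mul hfrac).add ((tendsto_const_nhds (x := h 0)).mul hinv1)
      simp only [mul_one, mul_zero, add_zero] at this
      exact Tendsto.congr (fun T => (key T).symm) this
    have : Tendsto (fun T : ℕ => A (T + 1) / ((T : ℕ) + 1 : ℕ)) atTop (nhds c) := by
      simpa using h1
    have := (tendsto_add_atTop_iff_nat (f := fun T : ℕ => A T / (T : ℝ)) 1).mp (by simpa using this)
    exact this
  · intro ha
    have ha1 : Tendsto (fun T : ℕ => A (T + 1) / ((T : ℝ) + 1)) atTop (nhds c) := by
      have := (tendsto_add_atTop_iff_nat (f := fun T : ℕ => A T / (T : ℝ)) 1).mpr ha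
      simpa using this
    have key : ∀ᶠ T : ℕ in atTop, (∑ t ∈ Finset.range T, h (t + 1)) / (T : ℝ) =
        (A (T + 1) / ((T : ℝ) + 1)) * (((T : ℝ) + 1) / T) - h 0 * ((T : ℝ))⁻¹ := by
      filter_upwards [eventually_ge_atTop 1] with T hT
      have hT0 : (T : ℝ) ≠ 0 := Nat.cast_ne_zero.mpr (by omega)
      have hT1 : (T : ℝ) + 1 ≠ 0 := by positivity
      rw [hsum]; field_simp
    have hfrac : Tendsto (fun T : ℕ => ((T : ℝ) + 1) / (T : ℝ)) atTop (nhds 1) := by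
      have : ∀ᶠ T : ℕ in atTop, ((T : ℝ) + 1) / (T : ℝ) = 1 + ((T : ℝ))⁻¹ := by
        filter_upwards [eventually_ge_atTop 1] with T hT
        have hT0 : (T : ℝ) ≠ 0 := Nat.cast_ne_zero.mpr (by omega)
        field_simp
      rw [tendsto_congr' this]
      simpa using tendsto_const_nhds.add hinv
    rw [tendsto_congr' key]
    have := (ha1.mul hfrac).sub ((tendsto_const_nhds (x := h 0)).mul hinv)
    simpa using this

lemma maximal_ergodic {Ω : Type*} [MeasurableSpace Ω] (Q : Measure Ω) [IsProbabilityMeasure Q]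
    {θ : Ω → Ω} (hθ : MeasurePreserving θ Q Q) {g : Ω → ℝ} (hg : Measurable g)
    {C : ℝ} (hgb : ∀ x, |g x| ≤ C) :
    0 ≤ ∫ x in {x : Ω | ∃ n, 1 ≤ n ∧ 0 < ∑ i ∈ Finset.range n, g (θ^[i] x)}, g x ∂Q := by
  set S : ℕ → Ω → ℝ := fun n x => ∑ i ∈ Finset.range n, g (θ^[i] x) with hS
  have hSmeas : ∀ n, Measurable (S n) := fun n =>
    Finset.measurable_sum _ (fun i _ => hg.comp (hθ.measurable.iterate i))
  have hSrec : ∀ n x, S (n + 1) x = g x + S n (θ x) := by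
    intro n x
    simp only [hS]
    rw [Finset.sum_range_succ' (fun i => g (θ^[i] x)) n]
    simp [Function.iterate_succ_apply]
    ring
  have hSbound : ∀ n x, |S n x| ≤ n * C := by
    intro n x
    calc |S n x| ≤ ∑ i ∈ Finset.range n, |g (θ^[i] x)| := Finset.abs_sum_le_sum_abs _ _
    _ ≤ ∑ _i ∈ Finset.range n, C := Finset.sum_le_sum (fun i _ => hgb _)
    _ = n * C := by simp [mul_comm]
  set M : ℕ → Ω → ℝ := fun N x => (Finset.range (N + 1)).sup' (by simp) (fun n => S n x) with hM
  have hMle : ∀ N x n, n ≤ N → S n x ≤ M N x := fun N x n hn =>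
    Finset.le_sup' (f := fun n => S n x) (Finset.mem_range.mpr (by omega))
  have hMnonneg : ∀ N x, 0 ≤ M N x := fun N x => by
    simpa [hS] using hMle N x 0 (Nat.zero_le _)
  have hMrep : ∀ N x, ∃ n ≤ N, M N x = S n x := by
    intro N x
    obtain ⟨n, hn, hne⟩ := Finset.exists_mem_eq_sup' (s := Finset.range (N + 1))
      (by simp) (fun n => S n x)
    exact ⟨n, by simpa using Nat.lt_succ_iff.mp (Finset.mem_range.mp hn), hne⟩
  have hMmeas : ∀ N, Measurable (M N) := by
    intro N
    have he : M N = (Finset.range (N + 1)).sup' (by simp) S := by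
      funext x; rw [hM, Finset.sup'_apply]
    rw [he]
    exact Finset.measurable_sup' _ (fun n _ => hSmeas n)
  have hMmono : ∀ N x, M N x ≤ M (N + 1) x := by
    intro N x
    exact Finset.sup'_le _ _ (fun n hn => Finset.le_sup'
      (f := fun n => S n x) (Finset.mem_range.mpr (by simp at hn; omega)))
  have hMbound : ∀ N x, ‖M N x‖ ≤ (N + 1) * C := by
    intro N x
    have hC : 0 ≤ C := le_trans (abs_nonneg _) (hgb x)
    rw [Real.norm_eq_abs, abs_of_nonneg (hMnonneg N x)]
    obtain ⟨n, hn, h⟩ := hMrep N x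
    rw [h]
    calc S n x ≤ |S n x| := le_abs_self _
    _ ≤ n * C := hSbound n x
    _ ≤ (N + 1) * C := by
        apply mul_le_mul_of_nonneg_right _ hC
        exact_mod_cast Nat.le_succ_of_le hn
  have hMint : ∀ N, Integrable (M N) Q :=
    fun N => (integrable_const ((N + 1) * C)).mono'
      (hMmeas N).aestronglyMeasurable (Filter.Eventually.of_forall (hMbound N))
  have hgint : Integrable g Q :=
    (integrable_const C).mono' hg.aestronglyMeasurable
      (Filter.Eventually.of_forall (fun x => by rw [Real.norm_eq_abs]; exact hgb x))
  set D : ℕ → Set Ω := fun N => {x | 0 < M N x} with hD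
  have hDmeas : ∀ N, MeasurableSet (D N) := fun N => measurableSet_lt measurable_const (hMmeas N)
  -- key pointwise inequality on D N
  have hkey : ∀ N, ∀ x ∈ D N, M N x - M N (θ x) ≤ g x := by
    intro N x hx
    obtain ⟨n, hn, hrep⟩ := hMrep N x
    have hx' : 0 < M N x := hx
    rcases Nat.eq_zero_or_pos n with rfl | hpos
    · simp [hS] at hrep; rw [hrep] at hx'; exact absurd hx' (lt_irrefl _)
    · obtain ⟨m, rfl⟩ := Nat.exists_eq_add_of_lt hpos
      simp only [Nat.zero_add] at *
      have : M N x = g x + S m (θ x) := by rw [hrep, hSrec]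
      have h2 : S m (θ x) ≤ M N (θ x) := hMle N (θ x) m (by omega)
      linarith
  -- integral inequality for each N
  have hstep : ∀ N, 0 ≤ ∫ x in D N, g x ∂Q := by
    intro N
    have hMcomp_meas : Measurable (fun x => M N (θ x)) := (hMmeas N).comp hθ.measurable
    have hMcomp_int : Integrable (fun x => M N (θ x)) Q :=
      (integrable_const ((N + 1) * C)).mono' hMcomp_meas.aestronglyMeasurable
        (Filter.Eventually.of_forall (fun x => hMbound N (θ x)))
    have h1 : ∫ x in D N, (M N x - M N (θ x)) ∂Q ≤ ∫ x in D N, g x ∂Q := by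
      apply setIntegral_mono_on (((hMint N).sub hMcomp_int).integrableOn)
        hgint.integrableOn (hDmeas N)
      exact hkey N
    have h2 : ∫ x in D N, (M N x - M N (θ x)) ∂Q
        = ∫ x in D N, M N x ∂Q - ∫ x in D N, M N (θ x) ∂Q :=
      integral_sub (hMint N).integrableOn hMcomp_int.integrableOn
    have h3 : ∫ x in D N, M N x ∂Q = ∫ x, M N x ∂Q := by
      apply setIntegral_eq_integral_of_forall_compl_eq_zero
      intro x hx
      have : ¬ 0 < M N x := hx
      linarith [hMnonneg N x]
    have h4 : ∫ x in D N, M N (θ x) ∂Q ≤ ∫ x, M N (θ x) ∂Q :=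
      setIntegral_le_integral hMcomp_int (Filter.Eventually.of_forall (fun x => hMnonneg N (θ x)))
    have h5 : ∫ x, M N (θ x) ∂Q = ∫ x, M N x ∂Q := by
      rw [← integral_map hθ.measurable.aemeasurable (hMmeas N).aestronglyMeasurable, hθ.map_eq]
    linarith
  -- pass to the limit
  have hDmono : Monotone D := by
    intro a b hab
    induction b, hab using Nat.le_induction with
    | base => exact le_refl _
    | succ b hab ih => exact le_trans ih (fun x hx => lt_of_lt_of_le hx (hMmono b x))
  have hDeq : (⋃ N, D N) = {x : Ω | ∃ n, 1 ≤ n ∧ 0 < S n x} := by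
    ext x
    simp only [Set.mem_iUnion, Set.mem_setOf_eq, hD]
    constructor
    · rintro ⟨N, hN⟩
      obtain ⟨n, hn, hrep⟩ := hMrep N x
      refine ⟨n, ?_, by rw [← hrep]; exact hN⟩
      rcases Nat.eq_zero_or_pos n with rfl | h
      · simp [hS] at hrep; rw [hrep] at hN; exact absurd hN (lt_irrefl _)
      · exact h
    · rintro ⟨n, hn1, hn⟩
      exact ⟨n, lt_of_lt_of_le hn (hMle n x n le_rfl)⟩
  have htend : Tendsto (fun N => ∫ x in D N, g x ∂Q) atTop (nhds (∫ x in ⋃ N, D N, g x ∂Q)) :=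
    tendsto_setIntegral_of_monotone hDmeas hDmono hgint.integrableOn
  rw [← hDeq]
  exact ge_of_tendsto' htend hstep

lemma limsup_le_of_sub (u v : ℕ → ℝ)
    (hub : IsBoundedUnder (· ≤ ·) atTop u) (hlb : IsBoundedUnder (· ≥ ·) atTop u)
    (h : Tendsto (fun n => v n - u n) atTop (nhds 0)) :
    limsup v atTop ≤ limsup u atTop := by
  refine le_of_forall_pos_le_add (fun ε hε => ?_)
  have hev : ∀ᶠ n in atTop, v n ≤ u n + ε := by
    filter_upwards [(h.eventually (gt_mem_nhds hε) : ∀ᶠ n in atTop, v n - u n < ε)] with n hn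
    linarith
  have hub' : IsBoundedUnder (· ≤ ·) atTop (fun n => u n + ε) := by
    obtain ⟨b, hb⟩ := hub
    rw [eventually_map] at hb
    exact ⟨b + ε, eventually_map.mpr (by
      filter_upwards [hb] with n hn; exact add_le_add_left hn ε)⟩
  have hcob : IsCoboundedUnder (· ≤ ·) atTop v := by
    apply IsBoundedUnder.isCoboundedUnder_le
    obtain ⟨b, hb⟩ := hlb
    rw [eventually_map] at hb
    refine ⟨b - 1, eventually_map.mpr ?_⟩
    filter_upwards [hb, h.eventually (eventually_nhds_iff.mpr
      ⟨Set.Ioo (-1) 1, fun y hy => hy, isOpen_Ioo, by norm_num⟩)] with n h1 h2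
    simp only [Set.mem_Ioo] at h2
    simp only [ge_iff_le] at h1 ⊢
    linarith [h2.1]
  calc limsup v atTop ≤ limsup (fun n => u n + ε) atTop := limsup_le_limsup hev hcob hub'
  _ = limsup u atTop + ε :=
      limsup_add_const atTop u ε hub hlb.isCoboundedUnder_le

lemma limsup_eq_of_sub (u v : ℕ → ℝ)
    (hub : IsBoundedUnder (· ≤ ·) atTop u) (hlb : IsBoundedUnder (· ≥ ·) atTop u)
    (hvub : IsBoundedUnder (· ≤ ·) atTop v) (hvlb : IsBoundedUnder (· ≥ ·) atTop v)
    (h : Tendsto (fun n => v n - u n) atTop (nhds 0)) :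
    limsup v atTop = limsup u atTop :=
  le_antisymm (limsup_le_of_sub u v hub hlb h)
    (limsup_le_of_sub v u hvub hvlb (by simpa using h.neg))

lemma limsup_avg_le {Ω : Type*} [MeasurableSpace Ω] (Q : Measure Ω) [IsProbabilityMeasure Q]
    {θ : Ω → Ω} (hθ : MeasurePreserving θ Q Q)
    (herg : ∀ A : Set Ω, MeasurableSet A → θ ⁻¹' A = A → Q A = 0 ∨ Q A = 1)
    {f : Ω → ℝ} (hf : Measurable f) (hf0 : ∀ x, 0 ≤ f x) (hf1 : ∀ x, f x ≤ 1) :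
    ∀ᵐ x ∂Q, limsup (fun n : ℕ => (∑ i ∈ Finset.range n, f (θ^[i] x)) / n) atTop
      ≤ ∫ x, f x ∂Q := by
  set c := ∫ x, f x ∂Q with hc
  set S : ℕ → Ω → ℝ := fun n x => ∑ i ∈ Finset.range n, f (θ^[i] x) with hS
  have hSmeas : ∀ n, Measurable (S n) := fun n =>
    Finset.measurable_sum _ (fun i _ => hf.comp (hθ.measurable.iterate i))
  have hSrec : ∀ n x, S (n + 1) x = f x + S n (θ x) := by
    intro n x
    simp only [hS]
    rw [Finset.sum_range_succ' (fun i => f (θ^[i] x)) n]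
    simp [Function.iterate_succ_apply]
    ring
  have hS0 : ∀ n x, 0 ≤ S n x := fun n x => Finset.sum_nonneg (fun i _ => hf0 _)
  have hS1 : ∀ n x, S n x ≤ n := by
    intro n x
    calc S n x ≤ ∑ _i ∈ Finset.range n, (1 : ℝ) := Finset.sum_le_sum (fun i _ => hf1 _)
    _ = n := by simp
  set u : Ω → ℕ → ℝ := fun x n => S n x / n with hu
  have hu0 : ∀ x n, 0 ≤ u x n := fun x n => div_nonneg (hS0 n x) (Nat.cast_nonneg n)
  have hu1 : ∀ x n, u x n ≤ 1 := by
    intro x n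
    rcases Nat.eq_zero_or_pos n with rfl | hn
    · simp [hu, hS]
    · exact (div_le_one (by exact_mod_cast hn)).mpr (hS1 n x)
  have hub : ∀ x, IsBoundedUnder (· ≤ ·) atTop (u x) :=
    fun x => ⟨1, eventually_map.mpr (Eventually.of_forall (hu1 x))⟩
  have hlb : ∀ x, IsBoundedUnder (· ≥ ·) atTop (u x) :=
    fun x => ⟨0, eventually_map.mpr (Eventually.of_forall (hu0 x))⟩
  set L : Ω → ℝ := fun x => limsup (u x) atTop with hL
  have hLmeas : Measurable L :=
    Measurable.limsup (fun n => (hSmeas n).div_const _)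
  have hLinv : ∀ x, L (θ x) = L x := by
    intro x
    apply limsup_eq_of_sub (u x) (u (θ x)) (hub x) (hlb x) (hub (θ x)) (hlb (θ x))
    have hdiff : ∀ n : ℕ, u (θ x) n - u x n = (f (θ^[n] x) - f x) / n := by
      intro n
      have h1 : S n (θ x) = S (n + 1) x - f x := by rw [hSrec]; ring
      have h2 : S (n + 1) x = S n x + f (θ^[n] x) := by
        simp only [hS]; rw [Finset.sum_range_succ]
      show S n (θ x) / n - S n x / n = (f (θ^[n] x) - f x) / n
      rw [h1, h2]
      ring
    have hbnd : ∀ n : ℕ, ‖u (θ x) n - u x n‖ ≤ 2 * (n : ℝ)⁻¹ := by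
      intro n
      rw [hdiff n, Real.norm_eq_abs, abs_div, abs_of_nonneg (Nat.cast_nonneg n : (0:ℝ) ≤ n)]
      rcases Nat.eq_zero_or_pos n with rfl | hn
      · simp
      · rw [div_le_iff₀ (by exact_mod_cast hn : (0:ℝ) < n)]
        have hab : |f (θ^[n] x) - f x| ≤ 2 := by
          rw [abs_sub_le_iff]
          constructor <;> nlinarith [hf0 x, hf1 x, hf0 (θ^[n] x), hf1 (θ^[n] x)]
        calc |f (θ^[n] x) - f x| ≤ 2 := hab
        _ ≤ 2 * (n:ℝ)⁻¹ * n := by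
            rw [mul_assoc, inv_mul_cancel₀ (by exact_mod_cast hn.ne' : (n:ℝ) ≠ 0)]
            simp
    exact squeeze_zero_norm hbnd
      (by simpa using tendsto_const_nhds.mul (tendsto_inv_atTop_nhds_zero_nat : Tendsto (fun n : ℕ => ((n : ℝ))⁻¹) atTop (nhds 0)))
  -- for each rational α > c, the set {α < L} is null
  have hnull : ∀ α : ℝ, c < α → Q {x | α < L x} = 0 := by
    intro α hα
    set E := {x | α < L x} with hE
    have hEmeas : MeasurableSet E := measurableSet_lt measurable_const hLmeas
    have hEinv : θ ⁻¹' E = E := by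
      ext x
      simp only [hE, Set.mem_preimage, Set.mem_setOf_eq, hLinv]
    rcases herg E hEmeas hEinv with h0 | h1
    · exact h0
    · exfalso
      set g : Ω → ℝ := fun x => f x - α with hg
      have hgmeas : Measurable g := hf.sub measurable_const
      have hgb : ∀ x, |g x| ≤ 1 + |α| := by
        intro x
        rw [hg]
        calc |f x - α| ≤ |f x| + |α| := abs_sub _ _
        _ ≤ 1 + |α| := by
            have := abs_of_nonneg (hf0 x)
            have := hf1 x
            have := hf0 x
            rw [abs_of_nonneg (hf0 x)]
            linarith
      have hmax := maximal_ergodic Q hθ hgmeas hgb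
      set D := {x : Ω | ∃ n, 1 ≤ n ∧ 0 < ∑ i ∈ Finset.range n, g (θ^[i] x)} with hD
      have hgsum : ∀ n x, ∑ i ∈ Finset.range n, g (θ^[i] x) = S n x - n * α := by
        intro n x
        simp only [hg, hS, Finset.sum_sub_distrib]
        simp [mul_comm]
      have hDmeas : MeasurableSet D := by
        have : D = ⋃ n : ℕ, {x | 1 ≤ n ∧ 0 < ∑ i ∈ Finset.range n, g (θ^[i] x)} := by
          ext x; simp [hD]
        rw [this]
        refine MeasurableSet.iUnion (fun n => ?_)
        rcases Nat.eq_zero_or_pos n with rfl | hn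
        · have he : {x : Ω | 1 ≤ 0 ∧ 0 < ∑ i ∈ Finset.range 0, g (θ^[i] x)} = ∅ := by
            ext x; simp
          rw [he]; exact MeasurableSet.empty
        · have h1n : (1:ℕ) ≤ n := hn
          simp only [h1n, true_and]
          exact measurableSet_lt measurable_const
            (Finset.measurable_sum _ (fun i _ => hgmeas.comp (hθ.measurable.iterate i)))
      have hED : E ⊆ D := by
        intro x hx
        have hfreq : ∃ᶠ n in atTop, α < u x n :=
          frequently_lt_of_lt_limsup ((hlb x).isCoboundedUnder_le) hx
        obtain ⟨n, hn1, hn⟩ := (hfreq.and_eventually (eventually_ge_atTop 1)).exists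
        refine ⟨n, hn, ?_⟩
        rw [hgsum]
        have hnpos : (0:ℝ) < n := by exact_mod_cast hn
        have := (lt_div_iff₀ hnpos).mp hn1
        linarith
      have hQD : Q D = 1 := le_antisymm prob_le_one
        (le_trans (le_of_eq h1.symm) (measure_mono hED))
      have hgint : Integrable g Q :=
        (integrable_const (1 + |α|)).mono' hgmeas.aestronglyMeasurable
          (Eventually.of_forall (fun x => by rw [Real.norm_eq_abs]; exact hgb x))
      have hfint : Integrable f Q :=
        (integrable_const 1).mono' hf.aestronglyMeasurable
          (Eventually.of_forall (fun x => by
            rw [Real.norm_eq_abs, abs_of_nonneg (hf0 x)]; exact hf1 x))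
      have hsplit : ∫ x in D, g x ∂Q = (∫ x in D, f x ∂Q) - α := by
        rw [hg]
        rw [integral_sub hfint.integrableOn (integrable_const α).integrableOn]
        rw [setIntegral_const, measureReal_def, hQD]
        simp
      have hle : ∫ x in D, f x ∂Q ≤ c :=
        setIntegral_le_integral hfint (Eventually.of_forall hf0)
      rw [hsplit] at hmax
      linarith
  -- combine over rationals
  rw [ae_iff]
  have hsub : {x | ¬ L x ≤ c} ⊆ ⋃ q : ℚ, {x | c < (q:ℝ) ∧ (q:ℝ) < L x} := by
    intro x hx
    simp only [Set.mem_setOf_eq, not_le] at hx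
    obtain ⟨q, hq1, hq2⟩ := exists_rat_btwn hx
    exact Set.mem_iUnion.mpr ⟨q, hq1, hq2⟩
  refine measure_mono_null hsub (measure_iUnion_null (fun q => ?_))
  rcases lt_or_ge c (q:ℝ) with h | h
  · refine measure_mono_null (fun x hx => ?_) (hnull (q:ℝ) h)
    exact hx.2
  · have : {x : Ω | c < (q:ℝ) ∧ (q:ℝ) < L x} = ∅ := by
      ext x; simp only [Set.mem_setOf_eq, Set.mem_empty_iff_false, iff_false]
      rintro ⟨h1, _⟩; exact absurd h1 (not_lt.mpr h)
    simp [this]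

theorem ams_ergodic_time_average {X : Type*} [MeasurableSpace X]
    (μ Q : Measure (ℕ → X)) [IsProbabilityMeasure μ] [IsProbabilityMeasure Q]
    (θ : (ℕ → X) → (ℕ → X)) (hθ : θ = fun x t => x (t + 1))
    (hams : ∀ A : Set (ℕ → X), MeasurableSet A →
      Tendsto (fun T : ℕ => (∑ t ∈ Finset.range T, (μ (θ^[t] ⁻¹' A)).toReal) / T)
        atTop (nhds (Q A).toReal))
    (hQmp : MeasurePreserving θ Q Q)
    (herg : ∀ A : Set (ℕ → X), MeasurableSet A → θ ⁻¹' A = A → Q A = 0 ∨ Q A = 1)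
    (B : Set X) (hB : MeasurableSet B) :
    μ {x : ℕ → X | Tendsto
        (fun T : ℕ => (∑ t ∈ Finset.range T, Set.indicator B (fun _ => (1:ℝ)) (x t)) / T)
        atTop (nhds (Q {y : ℕ → X | y 0 ∈ B}).toReal)} = 1 := by
  have hθm : Measurable θ := hQmp.measurable
  set A : Set (ℕ → X) := {y | y 0 ∈ B} with hA
  have hAmeas : MeasurableSet A := (measurable_pi_apply 0) hB
  set c : ℝ := (Q A).toReal with hc
  set f : (ℕ → X) → ℝ := A.indicator (fun _ => (1:ℝ)) with hf
  have hfm : Measurable f := measurable_const.indicator hAmeas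
  have hf0 : ∀ y, 0 ≤ f y := fun y => Set.indicator_nonneg (fun _ _ => zero_le_one) y
  have hf1 : ∀ y, f y ≤ 1 := by
    intro y; by_cases h : y ∈ A <;> simp [hf, Set.indicator_apply, h]
  -- iterate formula
  have hiter : ∀ (t : ℕ) (x : ℕ → X) (n : ℕ), θ^[t] x n = x (n + t) := by
    intro t
    induction t with
    | zero => intro x n; simp
    | succ t ih =>
        intro x n
        rw [Function.iterate_succ_apply]
        rw [ih (θ x) n]
        rw [hθ]
        show x (n + t + 1) = x (n + (t + 1))
        exact congrArg x (Nat.add_assoc n t 1)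
  have hind : ∀ (t : ℕ) (x : ℕ → X),
      Set.indicator B (fun _ => (1:ℝ)) (x t) = f (θ^[t] x) := by
    intro t x
    have hmem : θ^[t] x ∈ A ↔ x t ∈ B := by
      rw [hA]; simp only [Set.mem_setOf_eq, hiter t x 0, Nat.zero_add]
    rw [hf]
    by_cases h : x t ∈ B
    · rw [Set.indicator_of_mem h, Set.indicator_of_mem (hmem.mpr h)]
    · rw [Set.indicator_of_notMem h, Set.indicator_of_notMem (fun hc => h (hmem.mp hc))]
  -- the convergence set
  set G : Set (ℕ → X) := {x | Tendsto
      (fun T : ℕ => (∑ t ∈ Finset.range T, Set.indicator B (fun _ => (1:ℝ)) (x t)) / T)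
      atTop (nhds c)} with hG
  have hGmeas : MeasurableSet G := by
    apply measurableSet_tendsto (nhds c)
    intro T
    exact Measurable.div_const (Finset.measurable_sum _ (fun t _ =>
      (measurable_const.indicator hB).comp (measurable_pi_apply t))) _
  have hGinv : θ ⁻¹' G = G := by
    ext x
    simp only [Set.mem_preimage, hG, Set.mem_setOf_eq]
    have hcomp : ∀ t : ℕ, Set.indicator B (fun _ => (1:ℝ)) (θ x t)
        = Set.indicator B (fun _ => (1:ℝ)) (x (t + 1)) := by
      intro t; rw [hθ]
    have : (fun T : ℕ => (∑ t ∈ Finset.range T,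
        Set.indicator B (fun _ => (1:ℝ)) (θ x t)) / T)
        = fun T : ℕ => (∑ t ∈ Finset.range T,
        Set.indicator B (fun _ => (1:ℝ)) (x (t + 1))) / T := by
      funext T
      congr 1
      exact Finset.sum_congr rfl (fun t _ => hcomp t)
    rw [this]
    exact avg_shift_iff (fun t => Set.indicator B (fun _ => (1:ℝ)) (x t)) c
  -- Q G = 1 via Birkhoff machinery
  have hfint : Integrable f Q :=
    (integrable_const 1).mono' hfm.aestronglyMeasurable
      (Eventually.of_forall (fun y => by
        rw [Real.norm_eq_abs, abs_of_nonneg (hf0 y)]; exact hf1 y))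
  have hintf : ∫ y, f y ∂Q = c := by
    rw [hf, integral_indicator_const (1:ℝ) hAmeas, smul_eq_mul, mul_one, measureReal_def, hc]
  set f' : (ℕ → X) → ℝ := fun y => 1 - f y with hf'
  have hf'm : Measurable f' := measurable_const.sub hfm
  have hf'0 : ∀ y, 0 ≤ f' y := fun y => by simp only [hf']; linarith [hf1 y]
  have hf'1 : ∀ y, f' y ≤ 1 := fun y => by simp only [hf']; linarith [hf0 y]
  have hintf' : ∫ y, f' y ∂Q = 1 - c := by
    rw [hf']
    rw [integral_sub (integrable_const 1) hfint]
    rw [integral_const, measureReal_def, measure_univ, hintf]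
    simp
  have h1 := limsup_avg_le Q hQmp herg hfm hf0 hf1
  have h2 := limsup_avg_le Q hQmp herg hf'm hf'0 hf'1
  rw [hintf] at h1
  rw [hintf'] at h2
  have hc01 : 0 ≤ c ∧ c ≤ 1 := by
    constructor
    · exact ENNReal.toReal_nonneg
    · rw [hc]
      exact ENNReal.toReal_le_of_le_ofReal zero_le_one (by simpa using prob_le_one (μ := Q) (s := A))
  have hkey : ∀ᵐ x ∂Q, x ∈ G := by
    filter_upwards [h1, h2] with x hx1 hx2
    -- rewrite the target in terms of f
    have hfun : (fun T : ℕ => (∑ t ∈ Finset.range T,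
        Set.indicator B (fun _ => (1:ℝ)) (x t)) / T)
        = fun T : ℕ => (∑ t ∈ Finset.range T, f (θ^[t] x)) / T := by
      funext T
      congr 1
      exact Finset.sum_congr rfl (fun t _ => hind t x)
    simp only [hG, Set.mem_setOf_eq, hfun]
    set u : ℕ → ℝ := fun T => (∑ t ∈ Finset.range T, f (θ^[t] x)) / T with hu
    have hu0 : ∀ n, 0 ≤ u n := fun n =>
      div_nonneg (Finset.sum_nonneg (fun i _ => hf0 _)) (Nat.cast_nonneg n)
    have hu1 : ∀ n, u n ≤ 1 := by
      intro n
      rcases Nat.eq_zero_or_pos n with rfl | hn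
      · simp [hu]
      · rw [hu, div_le_one (by exact_mod_cast hn)]
        calc (∑ t ∈ Finset.range n, f (θ^[t] x))
            ≤ ∑ _t ∈ Finset.range n, (1:ℝ) := Finset.sum_le_sum (fun i _ => hf1 _)
        _ = n := by simp
    have hub : IsBoundedUnder (· ≤ ·) atTop u :=
      ⟨1, eventually_map.mpr (Eventually.of_forall hu1)⟩
    set v : ℕ → ℝ := fun T => (∑ t ∈ Finset.range T, f' (θ^[t] x)) / T with hv
    have hvub : IsBoundedUnder (· ≤ ·) atTop v := by
      refine ⟨1, eventually_map.mpr (Eventually.of_forall (fun n => ?_))⟩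
      rcases Nat.eq_zero_or_pos n with rfl | hn
      · simp [hv]
      · rw [hv]
        show (∑ t ∈ Finset.range n, f' (θ^[t] x)) / n ≤ 1
        rw [div_le_one (by exact_mod_cast hn)]
        calc (∑ t ∈ Finset.range n, f' (θ^[t] x))
            ≤ ∑ _t ∈ Finset.range n, (1:ℝ) := Finset.sum_le_sum (fun i _ => hf'1 _)
        _ = n := by simp
    have hvu : ∀ n : ℕ, 1 ≤ n → v n = 1 - u n := by
      intro n hn
      have hn0 : (n : ℝ) ≠ 0 := Nat.cast_ne_zero.mpr (by omega)
      show (∑ t ∈ Finset.range n, f' (θ^[t] x)) / n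
          = 1 - (∑ t ∈ Finset.range n, f (θ^[t] x)) / n
      have hsum : (∑ t ∈ Finset.range n, f' (θ^[t] x))
          = n - ∑ t ∈ Finset.range n, f (θ^[t] x) := by
        simp only [hf', Finset.sum_sub_distrib]
        simp
      rw [hsum]
      field_simp
    rw [Metric.tendsto_atTop]
    intro ε hε
    have hevu : ∀ᶠ n in atTop, u n < c + ε :=
      eventually_lt_of_limsup_lt (lt_of_le_of_lt hx1 (by linarith)) hub
    have hevv : ∀ᶠ n in atTop, v n < 1 - c + ε :=
      eventually_lt_of_limsup_lt (lt_of_le_of_lt hx2 (by linarith)) hvub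
    have hall : ∀ᶠ n in atTop, dist (u n) c < ε := by
      filter_upwards [hevu, hevv, eventually_ge_atTop 1] with n h1n h2n h3n
      rw [Real.dist_eq, abs_sub_lt_iff]
      constructor
      · linarith
      · rw [hvu n h3n] at h2n
        linarith
    exact eventually_atTop.mp hall
  have hQG : Q G = 1 := by
    have hcompl : Q Gᶜ = 0 := by
      have := hkey
      rw [ae_iff] at this
      convert this using 2
      rfl
    rw [← measure_univ (μ := Q), ← Set.compl_empty]
    rw [measure_congr (ae_eq_univ.mpr hcompl)]
    simp
  -- transfer to μ via AMS
  have hGit : ∀ t : ℕ, θ^[t] ⁻¹' G = G := by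
    intro t
    induction t with
    | zero => simp
    | succ t ih =>
        rw [Function.iterate_succ']
        rw [Set.preimage_comp, hGinv, ih]
  have hμG := hams G hGmeas
  have hconst : ∀ᶠ T : ℕ in atTop,
      (∑ t ∈ Finset.range T, (μ (θ^[t] ⁻¹' G)).toReal) / T = (μ G).toReal := by
    filter_upwards [eventually_ge_atTop 1] with T hT
    have : ∀ t ∈ Finset.range T, (μ (θ^[t] ⁻¹' G)).toReal = (μ G).toReal := by
      intro t _; rw [hGit t]
    have hT0 : (T : ℝ) ≠ 0 := Nat.cast_ne_zero.mpr (by omega)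
    rw [Finset.sum_congr rfl this, Finset.sum_const, Finset.card_range, nsmul_eq_mul]
    rw [mul_comm, mul_div_assoc, div_self hT0, mul_one]
  have hμlim : Tendsto (fun T : ℕ =>
      (∑ t ∈ Finset.range T, (μ (θ^[t] ⁻¹' G)).toReal) / T) atTop (nhds (μ G).toReal) :=
    tendsto_nhds_of_eventually_eq hconst
  have heq : (μ G).toReal = (Q G).toReal := tendsto_nhds_unique hμlim hμG
  rw [hQG] at heq
  simp only [ENNReal.toReal_one] at heq
  exact (ENNReal.toReal_eq_one_iff _).mp heq
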